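/- Let N ∈ ℕ, ζ a primitive N-th root of unity in a field of characteristic not dividing N, and v = (c,d) a nonzero element of (ℤ/Nℤ)² with 0 ≤ c < N. Define a₀ = (1/2)·(1+ζ^d)/(1-ζ^d) if c = 0, and a₀ = 1/2 - c/N if c ≠ 0; and for n ≥ 1, a_n = Σ_{ab = n, a ≡ c mod N} sgn(b)·ζ^{bd} where the sum is over factorizations n = ab with a, b ∈ ℤ. Then a_n is well-defined (finite sum) for each n, and the formal series Σ_{n≥0} a_n q^n has coefficients in ℤ[ζ, 1/(2N)]. -/

import Mathlib

/-- let `ζ` be a primitive `N`-th root of unity in a field whose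
characteristic does not divide `2N`, and `v = (c,d) ≠ 0` in `(ℤ/Nℤ)²` with `0 ≤ c < N`.
With `a₀ = (1/2)(1+ζ^d)/(1-ζ^d)` if `c = 0`, `a₀ = 1/2 - c/N` otherwise, and
`a_n = Σ_{ab = n, a ≡ c mod N} sgn(b)·ζ^{bd}` for `n ≥ 1`: each `a_n` is a well-defined
(finite) sum, and all coefficients `a_n` lie in `ℤ[ζ, 1/(2N)]`. -/
theorem stmt18 (N : ℕ) (hN : 0 < N) (K : Type*) [Field K] (ζ : K)
    (hζ : IsPrimitiveRoot ζ N) (hchar : ((2 * N : ℕ) : K) ≠ 0)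
    (c : ℕ) (d : ℤ) (hc : c < N) (hv : ¬(c = 0 ∧ (N : ℤ) ∣ d)) :
    (∀ n : ℕ, 1 ≤ n →
      {q : ℤ × ℤ | q.1 * q.2 = (n : ℤ) ∧ (N : ℤ) ∣ q.1 - (c : ℤ)}.Finite) ∧
    ((if c = 0 then (1 / 2 : K) * (1 + ζ ^ d) / (1 - ζ ^ d)
        else (1 / 2 : K) - (c : K) / (N : K)) ∈
      Subring.closure {ζ, (((2 * N : ℕ) : K))⁻¹}) ∧
    (∀ n : ℕ, 1 ≤ n →
      (∑ᶠ q ∈ {q : ℤ × ℤ | q.1 * q.2 = (n : ℤ) ∧ (N : ℤ) ∣ q.1 - (c : ℤ)},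
          ((q.2.sign : ℤ) : K) * ζ ^ (q.2 * d)) ∈
        Subring.closure {ζ, (((2 * N : ℕ) : K))⁻¹}) := by
  set R := Subring.closure {ζ, (((2 * N : ℕ) : K))⁻¹} with hR
  have hζR : ζ ∈ R := Subring.subset_closure (by simp)
  have hinvR : (((2 * N : ℕ) : K))⁻¹ ∈ R := Subring.subset_closure (by simp)
  have hζ0 : ζ ≠ 0 := hζ.ne_zero hN.ne'
  have hN0 : ((N : ℤ) : K) ≠ 0 ∨ True := Or.inr trivial
  have h2N : ((2 : K) * N ≠ 0) := by push_cast at hchar ⊢; exact hchar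
  have h2 : (2 : K) ≠ 0 := fun h => h2N (by rw [h, zero_mul])
  have hNK : (N : K) ≠ 0 := fun h => h2N (by rw [h, mul_zero])
  -- zpow reduction
  have hzpow : ∀ m : ℤ, ζ ^ m = ζ ^ (m % (N : ℤ)).toNat := by
    intro m
    have hmod : (0 : ℤ) ≤ m % (N : ℤ) := Int.emod_nonneg m (by exact_mod_cast hN.ne')
    conv_lhs => rw [← Int.emod_add_mul_ediv m (N : ℤ)]
    rw [zpow_add₀ hζ0, zpow_mul, zpow_natCast, hζ.pow_eq_one, one_zpow, mul_one,
      ← zpow_natCast ζ (m % (N:ℤ)).toNat, Int.toNat_of_nonneg hmod]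
  have hzpowR : ∀ m : ℤ, ζ ^ m ∈ R := by
    intro m; rw [hzpow m]; exact pow_mem hζR _
  -- finiteness
  have hfin : ∀ n : ℕ, 1 ≤ n →
      {q : ℤ × ℤ | q.1 * q.2 = (n : ℤ) ∧ (N : ℤ) ∣ q.1 - (c : ℤ)}.Finite := by
    intro n hn
    apply (Set.finite_Icc ((-(n : ℤ), -(n : ℤ))) (((n : ℤ), (n : ℤ)))).subset
    rintro ⟨a, b⟩ ⟨hab, -⟩
    have hn1 : (1 : ℤ) ≤ (n : ℤ) := by exact_mod_cast hn
    have ha : a ≠ 0 := by rintro rfl; simp at hab; omega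
    have hb : b ≠ 0 := by rintro rfl; simp at hab; omega
    have h1 : |a| * |b| = (n : ℤ) := by rw [← abs_mul, hab]; exact abs_of_nonneg (by omega)
    have ha' : |a| ≤ (n : ℤ) := by nlinarith [abs_pos.mpr ha, abs_pos.mpr hb]
    have hb' : |b| ≤ (n : ℤ) := by nlinarith [abs_pos.mpr ha, abs_pos.mpr hb]
    have ha2 := abs_le.mp ha'
    have hb2 := abs_le.mp hb'
    simp only [Set.mem_Icc, Prod.le_def]
    omega
  refine ⟨hfin, ?_, ?_⟩
  · by_cases hc0 : c = 0
    · simp only [hc0, if_pos]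
      have hd : ¬ (N : ℤ) ∣ d := fun h => hv ⟨hc0, h⟩
      set w := ζ ^ d with hw
      have hw1 : w ≠ 1 := fun h => hd ((hζ.zpow_eq_one_iff_dvd d).mp h)
      have hwN : w ^ N = 1 := by
        rw [hw, ← zpow_natCast, ← zpow_mul, mul_comm, zpow_mul, zpow_natCast, hζ.pow_eq_one, one_zpow]
      have hwR : w ∈ R := hzpowR d
      have hgeom : ∑ k ∈ Finset.range N, w ^ k = 0 := by
        have := geom_sum_eq hw1 N
        rw [this, hwN, sub_self, zero_div]
      set S := ∑ k ∈ Finset.range N, ((k : K) + 1) * w ^ k with hS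
      have key : ∀ m : ℕ, (1 - w) * (∑ k ∈ Finset.range m, ((k : K) + 1) * w ^ k)
          = (∑ k ∈ Finset.range m, w ^ k) - m * w ^ m := by
        intro m
        induction m with
        | zero => simp
        | succ m ih =>
          rw [Finset.sum_range_succ, Finset.sum_range_succ, mul_add, ih]
          push_cast
          ring
      have hkey : (1 - w) * S = -(N : K) := by
        rw [hS, key N, hgeom, hwN, mul_one, zero_sub]
      clear_value w S
      have hw1' : (1 : K) - w ≠ 0 := sub_ne_zero.mpr (Ne.symm hw1)
      have heq : (1 / 2 : K) * (1 + w) / (1 - w) = (-(1 + w) * S) * (((2 * N : ℕ) : K))⁻¹ := by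
        have h2N' : ((2 * N : ℕ) : K) ≠ 0 := hchar
        field_simp
        linear_combination (norm := (push_cast; ring)) (2*((1:K)+w))*hkey
      rw [heq]
      refine mul_mem (mul_mem (neg_mem (add_mem (one_mem R) hwR)) ?_) hinvR
      rw [hS]
      exact sum_mem fun k _ => mul_mem (add_mem (by exact_mod_cast natCast_mem R k) (one_mem R)) (pow_mem hwR k)
    · simp only [hc0, if_neg, if_false]
      have heq : (1 / 2 : K) - (c : K) / (N : K) = ((N : K) - 2 * c) * (((2 * N : ℕ) : K))⁻¹ := by
        have h2N' : ((2 * N : ℕ) : K) ≠ 0 := hchar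
        push_cast at h2N' ⊢
        field_simp
      rw [heq]
      exact mul_mem (sub_mem (natCast_mem R N) (mul_mem (by exact_mod_cast natCast_mem R 2) (natCast_mem R c))) hinvR
  · intro n hn
    rw [finsum_mem_eq_finite_toFinset_sum _ (hfin n hn)]
    exact sum_mem fun q _ => mul_mem (intCast_mem R _) (hzpowR _)
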